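/- If A = S^{−1} dS is a pure gauge connection (S invertible of degree 0) and d^N = 0 with q a primitive N-th root of unity, then the curvature Ω = D^{N−1} A vanishes, i.e. D^N Φ = 0 for all Φ. -/
import Mathlib


/-- in the setting of the covariant `q`-differential, if the connection is a
pure gauge, `A = S⁻¹ dS` for an invertible degree-0 element `S`, `q` is a primitive
`N`-th root of unity and `d^N = 0` (on the algebra and on the module), then the curvature
`Ω = D^{N−1} A` vanishes, i.e. `D^N Φ = 0` for all `Φ`. -/
theorem pure_gauge_flat
    (q : ℂ) (𝒜 : Type*) [Ring 𝒜] [Algebra ℂ 𝒜]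
    (H : Type*) [AddCommGroup H] [Module ℂ H] [Module 𝒜 H] [IsScalarTower ℂ 𝒜 H]
    -- the grading of 𝒜
    (G : ℕ → Set 𝒜)
    (hGadd : ∀ p, ∀ X ∈ G p, ∀ Y ∈ G p, X + Y ∈ G p)
    (hGmul : ∀ p r, ∀ X ∈ G p, ∀ Y ∈ G r, X * Y ∈ G (p + r))
    -- the q-differential on the algebra and on the module
    (dA : 𝒜 →ₗ[ℂ] 𝒜) (hdeg : ∀ p, ∀ X ∈ G p, dA X ∈ G (p + 1))
    (dH : H →ₗ[ℂ] H)
    (hLeibA : ∀ p, ∀ X ∈ G p, ∀ Y : 𝒜, dA (X * Y) = dA X * Y + q ^ p • (X * dA Y))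
    (hLeibH : ∀ p, ∀ X ∈ G p, ∀ Φ : H, dH (X • Φ) = dA X • Φ + q ^ p • (X • dH Φ))
    -- S is an invertible element of degree 0 and A = S⁻¹ d S is the pure gauge connection
    (S Sinv : 𝒜) (hS : S ∈ G 0) (hSinv : Sinv ∈ G 0)
    (hinv₁ : Sinv * S = 1) (hinv₂ : S * Sinv = 1)
    (Acon : 𝒜) (hAcon : Acon = Sinv * dA S)
    (D : H → H) (hD : ∀ Φ, D Φ = dH Φ + Acon • Φ)
    (DA : 𝒜 → 𝒜) (hDA : ∀ X, DA X = dA X + Acon * X)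
    -- q is a primitive N-th root of unity and d^N = 0
    (N : ℕ) (hN : 1 ≤ N) (hq : IsPrimitiveRoot q N)
    (hdNA : ∀ X : 𝒜, (⇑dA)^[N] X = 0)
    (hdNH : ∀ Φ : H, (⇑dH)^[N] Φ = 0) :
    DA^[N - 1] Acon = 0 ∧ ∀ Φ : H, D^[N] Φ = 0 := by
  have hDA' : ∀ X : 𝒜, DA X = Sinv * dA (S * X) := by
    intro X
    rw [hDA, hAcon, hLeibA 0 S hS X, pow_zero, one_smul, mul_add, ← mul_assoc Sinv S,
      hinv₁, one_mul, ← mul_assoc, add_comm]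
  have hD' : ∀ Φ : H, D Φ = Sinv • dH (S • Φ) := by
    intro Φ
    rw [hD, hAcon, hLeibH 0 S hS Φ, pow_zero, one_smul, smul_add, ← mul_smul, ← mul_smul,
      hinv₁, one_smul, add_comm]
  have hDAiter : ∀ (k : ℕ) (X : 𝒜), DA^[k] X = Sinv * (⇑dA)^[k] (S * X) := by
    intro k
    induction k with
    | zero => intro X; simp [← mul_assoc, hinv₁]
    | succ k ih =>
      intro X
      rw [Function.iterate_succ_apply', ih, hDA', ← mul_assoc, hinv₂, one_mul,
        Function.iterate_succ_apply']
  have hDiter : ∀ (k : ℕ) (Φ : H), D^[k] Φ = Sinv • (⇑dH)^[k] (S • Φ) := by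
    intro k
    induction k with
    | zero => intro Φ; simp [smul_smul, hinv₁]
    | succ k ih =>
      intro Φ
      rw [Function.iterate_succ_apply', ih, hD', smul_smul, hinv₂, one_smul,
        Function.iterate_succ_apply']
  constructor
  · have hSA : S * Acon = dA S := by
      rw [hAcon, ← mul_assoc, hinv₂, one_mul]
    have h1 : (⇑dA)^[N - 1] (dA S) = (⇑dA)^[N] S := by
      rw [← Function.iterate_succ_apply, Nat.succ_eq_add_one, Nat.sub_add_cancel hN]
    rw [hDAiter, hSA, h1, hdNA, mul_zero]
  · intro Φ
    rw [hDiter, hdNH, smul_zero]
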